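/- Let ρ♭: Gal(ℂ/ℝ) → GO_{2n+1}(Q̄_ℓ) be a continuous homomorphism and let ρ♯ be its composition with the standard embedding GO_{2n+1} ⊂ GL_{2n+1}. If the trace of ρ♯(c) is ±1, where c is complex conjugation, then ρ♭ is odd, i.e. the trace of Ad(ρ♭(c)) acting on the Lie algebra so_{2n+1} equals −n = −rank(so_{2n+1}). -/

import Mathlib

open Matrix

/-- The antidiagonal matrix `J` of size `2n+1` with ones on the antidiagonal (0-indexed),
realizing the symmetric bilinear form defining `GO_{2n+1}`. -/
def antidiagJ (K : Type*) [Field K] (n : ℕ) :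
    Matrix (Fin (2 * n + 1)) (Fin (2 * n + 1)) K :=
  fun i j => if (i : ℕ) + (j : ℕ) = 2 * n then 1 else 0

/-- The linear map `A ↦ A + J Aᵀ J`, whose kernel is the Lie algebra of `SO_{2n+1}`. -/
noncomputable def soDefMap (K : Type*) [Field K] (n : ℕ) :
    Matrix (Fin (2 * n + 1)) (Fin (2 * n + 1)) K →ₗ[K]
      Matrix (Fin (2 * n + 1)) (Fin (2 * n + 1)) K :=
  LinearMap.id +
    (LinearMap.mulLeft K (antidiagJ K n)).comp
      ((LinearMap.mulRight K (antidiagJ K n)).comp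
        (Matrix.transposeLinearEquiv (Fin (2 * n + 1)) (Fin (2 * n + 1)) K K).toLinearMap)

/-- The Lie algebra `so_{2n+1}`: matrices `A` with `A + J Aᵀ J⁻¹ = 0` (note `J⁻¹ = J`). -/
noncomputable def soLie (K : Type*) [Field K] (n : ℕ) :
    Submodule K (Matrix (Fin (2 * n + 1)) (Fin (2 * n + 1)) K) :=
  LinearMap.ker (soDefMap K n)

section helpers

variable {K : Type*} [Field K] {n : ℕ}

lemma antidiagJ_apply (i j : Fin (2*n+1)) :
    antidiagJ K n i j = if j = i.rev then 1 else 0 := by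
  have : ((i : ℕ) + (j : ℕ) = 2 * n) ↔ j = i.rev := by
    rw [Fin.ext_iff, Fin.val_rev]; omega
  simp [antidiagJ, this]

lemma antidiagJ_sq : antidiagJ K n * antidiagJ K n = 1 := by
  ext i j
  rw [Matrix.mul_apply, Finset.sum_eq_single i.rev]
  · simp [antidiagJ_apply, Matrix.one_apply, eq_comm]
  · intro k _ hk
    rw [antidiagJ_apply, if_neg hk, zero_mul]
  · simp

lemma antidiagJ_transpose : (antidiagJ K n)ᵀ = antidiagJ K n := by
  ext i j
  simp only [Matrix.transpose_apply, antidiagJ]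
  rw [Nat.add_comm]

lemma repr_std {m : Type*} [Fintype m] [DecidableEq m]
    (A : Matrix m m K) (i j : m) :
    (Matrix.stdBasis K m m).repr A (i, j) = A i j := by
  simp [Matrix.stdBasis, Pi.basis_repr]

lemma trace_matrix_map {m : Type*} [Fintype m] [DecidableEq m]
    (f : Matrix m m K →ₗ[K] Matrix m m K) :
    LinearMap.trace K _ f = ∑ p : m × m, f (Matrix.single p.1 p.2 (1:K)) p.1 p.2 := by
  rw [LinearMap.trace_eq_matrix_trace K (Matrix.stdBasis K m m), Matrix.trace]
  refine Finset.sum_congr rfl fun p _ => ?_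
  obtain ⟨i, j⟩ := p
  rw [Matrix.diag, LinearMap.toMatrix_apply, Matrix.stdBasis_eq_single, repr_std]

lemma sandwich_apply {m : Type*} [Fintype m] [DecidableEq m]
    (B C : Matrix m m K) (a b i j : m) :
    (B * (Matrix.single a b (1:K) * C)) i j = B i a * C b j := by
  rw [Matrix.mul_apply, Finset.sum_eq_single a]
  · rw [Matrix.single_mul_apply_same, one_mul]
  · intro k _ hk
    rw [Matrix.single_mul_apply_of_ne (1:K) a b k j hk, mul_zero]
  · simp

lemma stdBasisMatrix_transpose {m : Type*} [DecidableEq m] (i j : m) :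
    (Matrix.single i j (1:K))ᵀ = Matrix.single j i (1:K) := by
  ext a b
  simp only [Matrix.transpose_apply, Matrix.single, Matrix.of_apply]
  congr 1
  exact propext and_comm

lemma trace_mul_transpose' {m : Type*} [Fintype m]
    (B C : Matrix m m K) :
    Matrix.trace (B * Cᵀ) = ∑ p : m × m, B p.1 p.2 * C p.1 p.2 := by
  rw [Fintype.sum_prod_type, Matrix.trace]
  refine Finset.sum_congr rfl fun i _ => ?_
  rw [Matrix.diag, Matrix.mul_apply]
  exact Finset.sum_congr rfl fun j _ => rfl

end helpers

/-- Let `ρ♭ : Gal(ℂ/ℝ) → GO_{2n+1}(Q̄_ℓ)` be a (continuous) homomorphism and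
`ρ♯` its composition with the standard embedding `GO_{2n+1} ⊂ GL_{2n+1}`.  Here `g = ρ♭(c)`
is the image of complex conjugation, so `g² = 1` and `gᵀ J g = μ J` for some similitude
factor `μ ≠ 0`.  If `Tr ρ♯(c) = ±1` then `ρ♭` is odd: the trace of `Ad(ρ♭(c)) = (A ↦ g A g⁻¹)`
on the Lie algebra `so_{2n+1}` equals `−n = −rank(so_{2n+1})`.  (Since `g² = 1` we have
`g⁻¹ = g`, so `Ad(g) A = g A g`.) -/
theorem stmt1 (K : Type*) [Field K] [IsAlgClosed K] [CharZero K] (n : ℕ)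
    (g : Matrix (Fin (2 * n + 1)) (Fin (2 * n + 1)) K)
    (hg2 : g * g = 1)
    (μ : K) (hμ : μ ≠ 0)
    (hGO : g.transpose * antidiagJ K n * g = μ • antidiagJ K n)
    (htr : Matrix.trace g = 1 ∨ Matrix.trace g = -1)
    (Ad : soLie K n →ₗ[K] soLie K n)
    (hAd : ∀ A : soLie K n,
      (↑(Ad A) : Matrix (Fin (2 * n + 1)) (Fin (2 * n + 1)) K) =
        g * (↑A : Matrix (Fin (2 * n + 1)) (Fin (2 * n + 1)) K) * g) :
    LinearMap.trace K ↥(soLie K n) Ad = -(n : K) := by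
  set J := antidiagJ K n with hJdef
  have hJ2 : J * J = 1 := antidiagJ_sq
  have hJt : Jᵀ = J := antidiagJ_transpose
  have htrg_ne : Matrix.trace g ≠ 0 := by
    rcases htr with h | h <;> rw [h] <;> norm_num
  -- similitude factor is 1
  have hgtJ : gᵀ * J = μ • (J * g) := by
    have h := congrArg (· * g) hGO
    simp only [Matrix.smul_mul] at h
    rw [Matrix.mul_assoc (gᵀ * J) g g, hg2, Matrix.mul_one] at h
    exact h
  have hgt : gᵀ = μ • (J * g * J) := by
    have h := congrArg (· * J) hgtJ
    simp only [Matrix.smul_mul] at h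
    rw [Matrix.mul_assoc gᵀ J J, hJ2, Matrix.mul_one] at h
    exact h
  have hμ1 : μ = 1 := by
    have h := congrArg Matrix.trace hgt
    rw [Matrix.trace_transpose, Matrix.trace_smul, Matrix.trace_mul_cycle, hJ2,
      Matrix.one_mul] at h
    rw [smul_eq_mul] at h
    have h' : μ * Matrix.trace g = 1 * Matrix.trace g := by rw [one_mul]; exact h.symm
    exact mul_right_cancel₀ htrg_ne h'
  rw [hμ1, one_smul] at hgt
  have hJc : ∀ X : Matrix (Fin (2*n+1)) (Fin (2*n+1)) K, J * (J * X) = X := by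
    intro X; rw [← Matrix.mul_assoc, hJ2, Matrix.one_mul]
  -- membership criterion
  have memso : ∀ X : Matrix (Fin (2*n+1)) (Fin (2*n+1)) K,
      X ∈ soLie K n ↔ X + J * (Xᵀ * J) = 0 := by
    intro X
    rw [soLie, LinearMap.mem_ker]
    constructor <;> intro h <;> simpa [soDefMap] using h
  -- the auxiliary endomorphism on the full matrix space
  set τ : Matrix (Fin (2*n+1)) (Fin (2*n+1)) K →ₗ[K] Matrix (Fin (2*n+1)) (Fin (2*n+1)) K :=
    (LinearMap.mulLeft K J).comp
      ((LinearMap.mulRight K J).comp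
        (Matrix.transposeLinearEquiv (Fin (2*n+1)) (Fin (2*n+1)) K K).toLinearMap) with hτ
  set L : Matrix (Fin (2*n+1)) (Fin (2*n+1)) K →ₗ[K] Matrix (Fin (2*n+1)) (Fin (2*n+1)) K :=
    (LinearMap.mulLeft K g).comp (LinearMap.mulRight K g) with hL
  have hτa : ∀ X, τ X = J * (Xᵀ * J) := fun X => rfl
  have hLa : ∀ X, L X = g * (X * g) := fun X => rfl
  set f : Matrix (Fin (2*n+1)) (Fin (2*n+1)) K →ₗ[K] Matrix (Fin (2*n+1)) (Fin (2*n+1)) K :=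
    (2⁻¹ : K) • (L - L.comp τ) with hf
  have hfa : ∀ X, f X = (2⁻¹ : K) • (g * (X * g) - g * ((J * (Xᵀ * J)) * g)) := by
    intro X
    rw [hf]
    simp only [LinearMap.smul_apply, LinearMap.sub_apply, LinearMap.comp_apply, hLa, hτa]
  have hfmem : ∀ X, f X ∈ soLie K n := by
    intro X
    rw [memso, hfa]
    rw [Matrix.transpose_smul, Matrix.transpose_sub]
    simp only [Matrix.transpose_mul, Matrix.transpose_transpose, hJt, hgt,
      Matrix.smul_mul, Matrix.mul_smul, Matrix.mul_sub, Matrix.sub_mul,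
      Matrix.mul_assoc, hJc, hJ2, Matrix.mul_one, Matrix.one_mul]
    module
  have hres : ∀ x ∈ soLie K n, f x ∈ soLie K n := fun x _ => hfmem x
  have hAdres : Ad = f.restrict hres := by
    refine LinearMap.ext fun A => Subtype.ext ?_
    have hA : (A : Matrix (Fin (2*n+1)) (Fin (2*n+1)) K) ∈ soLie K n := A.2
    rw [memso] at hA
    have hA' : J * ((A : Matrix (Fin (2*n+1)) (Fin (2*n+1)) K)ᵀ * J) = -(A : Matrix (Fin (2*n+1)) (Fin (2*n+1)) K) := by
      linear_combination (norm := module) hA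
    rw [LinearMap.restrict_apply]
    show _ = f (A : Matrix (Fin (2*n+1)) (Fin (2*n+1)) K)
    rw [hAd, hfa, hA']
    rw [Matrix.neg_mul, Matrix.mul_neg, sub_neg_eq_add, Matrix.mul_assoc]
    rw [smul_add]
    rw [← Matrix.mul_assoc]
    match_scalars <;> ring
  rw [hAdres, LinearMap.trace_restrict_eq_of_forall_mem (soLie K n) f hfmem hres]
  -- compute the trace of f
  rw [hf, _root_.map_smul, map_sub, smul_eq_mul]
  have htrL : LinearMap.trace K _ L = Matrix.trace g * Matrix.trace g := by
    rw [trace_matrix_map]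
    have : ∀ p : Fin (2*n+1) × Fin (2*n+1),
        L (Matrix.single p.1 p.2 (1:K)) p.1 p.2 = g p.1 p.1 * g p.2 p.2 := by
      intro p; rw [hLa, sandwich_apply]
    rw [Finset.sum_congr rfl fun p _ => this p, Fintype.sum_prod_type, Matrix.trace]
    simp only [Matrix.trace, Matrix.diag, Finset.sum_mul, Finset.mul_sum]
    exact Finset.sum_congr rfl fun i _ => Finset.sum_congr rfl fun j _ => mul_comm _ _
  have htrLτ : LinearMap.trace K _ (L.comp τ) = (2*n+1 : K) := by
    rw [trace_matrix_map]
    have hval : ∀ p : Fin (2*n+1) × Fin (2*n+1),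
        (L.comp τ) (Matrix.single p.1 p.2 (1:K)) p.1 p.2
          = (g * J) p.1 p.2 * (J * g) p.1 p.2 := by
      intro p
      rw [LinearMap.comp_apply, hτa, hLa, stdBasisMatrix_transpose]
      have : g * ((J * (Matrix.single p.2 p.1 (1:K) * J)) * g)
          = (g * J) * (Matrix.single p.2 p.1 (1:K) * (J * g)) := by
        simp only [Matrix.mul_assoc]
      rw [this, sandwich_apply]
    rw [Finset.sum_congr rfl fun p _ => hval p, ← trace_mul_transpose']
    have : (g * J) * (J * g)ᵀ = 1 := by
      rw [Matrix.transpose_mul, hJt, hgt]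
      simp only [Matrix.mul_assoc, hJc, hJ2, Matrix.mul_one]
      exact hg2
    rw [this, Matrix.trace_one]
    simp
  rw [htrL, htrLτ]
  have h1 : Matrix.trace g * Matrix.trace g = 1 := by
    rcases htr with h | h <;> rw [h] <;> ring
  rw [h1]
  field_simp
  ring
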